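/- Let P = {p_1, ..., p_n} ⊆ ℝ where p_i = 2^{i+1} - 1. If C_1, C_2 ⊆ P are nonempty and 1-separated, meaning dist(C_1, C_2) ≥ max(diam(C_1), diam(C_2)), then min(|C_1|, |C_2|) = 1. -/
import Mathlib

private lemma stmt0_aux (n : ℕ) (C₁ C₂ : Finset ℝ)
    (hP₁ : C₁ ⊆ (Finset.Icc 1 n).image (fun i : ℕ => (2:ℝ)^(i+1) - 1))
    (hP₂ : C₂ ⊆ (Finset.Icc 1 n).image (fun i : ℕ => (2:ℝ)^(i+1) - 1))
    (h₁ : C₁.Nonempty) (h₂ : C₂.Nonempty)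
    (hsep : ∀ p ∈ C₁, ∀ q ∈ C₂,
      max (Metric.diam (↑C₁ : Set ℝ)) (Metric.diam (↑C₂ : Set ℝ)) ≤ dist p q)
    (hc₁ : 1 < C₁.card) (hc₂ : 1 < C₂.card)
    (hle : C₁.max' h₁ ≤ C₂.max' h₂) : False := by
  set b := C₁.max' h₁ with hbdef
  set d := C₂.max' h₂ with hddef
  have hb : b ∈ C₁ := C₁.max'_mem h₁
  have hd : d ∈ C₂ := C₂.max'_mem h₂
  -- diam C₁ > 0
  obtain ⟨a, ha, a', ha', hne⟩ := Finset.one_lt_card.mp hc₁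
  have hbound₁ : Bornology.IsBounded (↑C₁ : Set ℝ) := C₁.finite_toSet.isBounded
  have hbound₂ : Bornology.IsBounded (↑C₂ : Set ℝ) := C₂.finite_toSet.isBounded
  have hd1pos : 0 < Metric.diam (↑C₁ : Set ℝ) :=
    lt_of_lt_of_le (dist_pos.mpr hne) (Metric.dist_le_diam_of_mem hbound₁ ha ha')
  -- a second point of C₂
  obtain ⟨c, hc, hcne⟩ := Finset.exists_mem_ne hc₂ d
  have hcd : c < d := lt_of_le_of_ne (C₂.le_max' c hc) hcne
  have hdc_le : d - c ≤ Metric.diam (↑C₂ : Set ℝ) := by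
    have := Metric.dist_le_diam_of_mem hbound₂ hd hc
    rw [Real.dist_eq] at this
    rw [abs_of_pos (by linarith)] at this
    linarith
  -- b < d
  have hbd := hsep b hb d hd
  have hbne : b ≠ d := by
    intro h
    rw [h, dist_self] at hbd
    have := le_trans (le_max_left _ _) hbd
    linarith
  have hblt : b < d := lt_of_le_of_ne hle hbne
  have hbd' : d - c ≤ d - b := by
    have h2 := le_trans (le_max_right _ _) hbd
    rw [Real.dist_eq, abs_of_neg (by linarith)] at h2
    linarith
  -- b < c
  have hbc := hsep b hb c hc
  have hbcne : b ≠ c := by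
    intro h
    rw [h, dist_self] at hbc
    have := le_trans (le_max_left _ _) hbc
    linarith
  have hbclt : b < c := lt_of_le_of_ne (by linarith) hbcne
  have hkey : d - c ≤ c - b := by
    have h2 := le_trans (le_max_right _ _) hbc
    rw [Real.dist_eq, abs_of_neg (by linarith)] at h2
    linarith
  -- get indices
  obtain ⟨β, hβ, hβe⟩ := Finset.mem_image.mp (hP₁ hb)
  obtain ⟨γ, hγ, hγe⟩ := Finset.mem_image.mp (hP₂ hc)
  obtain ⟨δ, hδ, hδe⟩ := Finset.mem_image.mp (hP₂ hd)
  have hβγ : β < γ := by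
    have : (2:ℝ)^(β+1) < 2^(γ+1) := by rw [← hβe, ← hγe] at hbclt; linarith
    have := (pow_lt_pow_iff_right₀ (a := (2:ℝ)) (by norm_num)).mp this
    omega
  have hγδ : γ < δ := by
    have : (2:ℝ)^(γ+1) < 2^(δ+1) := by rw [← hγe, ← hδe] at hcd; linarith
    have := (pow_lt_pow_iff_right₀ (a := (2:ℝ)) (by norm_num)).mp this
    omega
  -- numeric contradiction: 2*2^(γ+1) ≥ 2^(β+1) + 2^(δ+1)
  have hsum : (2:ℝ)^(β+1) + 2^(δ+1) ≤ 2 * 2^(γ+1) := by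
    rw [← hβe, ← hγe, ← hδe] at hkey; linarith
  have h1 : (2:ℝ)^(γ+2) ≤ 2^(δ+1) := pow_le_pow_right₀ (by norm_num) (by omega)
  have h2 : (0:ℝ) < 2^(β+1) := by positivity
  have h3 : (2:ℝ)^(γ+2) = 2 * 2^(γ+1) := by ring
  linarith

/-- For the exponential point set `P = {2^{i+1}-1 : i = 1..n} ⊆ ℝ`,
any two nonempty 1-separated clusters `C₁, C₂ ⊆ P` (every pair of points from the
two clusters is at distance at least `max(diam C₁, diam C₂)`) satisfy
`min(|C₁|,|C₂|) = 1`. -/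
theorem stmt0 (n : ℕ) (C₁ C₂ : Finset ℝ)
    (hP₁ : C₁ ⊆ (Finset.Icc 1 n).image (fun i : ℕ => (2:ℝ)^(i+1) - 1))
    (hP₂ : C₂ ⊆ (Finset.Icc 1 n).image (fun i : ℕ => (2:ℝ)^(i+1) - 1))
    (h₁ : C₁.Nonempty) (h₂ : C₂.Nonempty)
    (hsep : ∀ p ∈ C₁, ∀ q ∈ C₂,
      max (Metric.diam (↑C₁ : Set ℝ)) (Metric.diam (↑C₂ : Set ℝ)) ≤ dist p q) :
    min C₁.card C₂.card = 1 := by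
  by_contra h
  have hc1 : 1 ≤ C₁.card := Finset.card_pos.mpr h₁
  have hc2 : 1 ≤ C₂.card := Finset.card_pos.mpr h₂
  have hboth : 1 < C₁.card ∧ 1 < C₂.card := by
    rcases le_or_gt C₁.card C₂.card with hcc | hcc <;> constructor <;> omega
  have hsep' : ∀ p ∈ C₂, ∀ q ∈ C₁,
      max (Metric.diam (↑C₂ : Set ℝ)) (Metric.diam (↑C₁ : Set ℝ)) ≤ dist p q := by
    intro p hp q hq
    rw [max_comm, dist_comm]
    exact hsep q hq p hp
  rcases le_total (C₁.max' h₁) (C₂.max' h₂) with hle | hle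
  · exact absurd (stmt0_aux n C₁ C₂ hP₁ hP₂ h₁ h₂ hsep hboth.1 hboth.2 hle) not_false
  · exact absurd (stmt0_aux n C₂ C₁ hP₂ hP₁ h₂ h₁ hsep' hboth.2 hboth.1 hle) not_false
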